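/- Let E be a finite-dimensional real inner product space, p ≥ 1 an integer, and let σ > 0, A > 0, c > 0, u_min ∈ (0,1], f* ∈ ℝ and q a real number with 0 < q < (p+1)/p. Let f : E → ℝ and let x : ℕ → E, u, R, s : ℕ → ℝ satisfy for all k: u (k+1) ∈ [u_min, 1]; R (k+1) = (1 - u (k+1))·R k + u (k+1)·f(x (k+1)); f* ≤ f(x k) ≤ R k; R k - R (k+1) ≥ u_min·c·‖x (k+1) - x k‖^(p+1); s (k+1) ≥ 0 and s (k+1) ≤ A·‖x (k+1) - x k‖^p; and f(x (k+1)) - f* ≤ σ·(s (k+1))^q. Then there exists C > 0 such that f(x k) - f* ≤ C·k^(−p·q/(p+1−p·q)) for all k ≥ 1. -/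

import Mathlib

set_option maxHeartbeats 1000000

open Real

theorem rate_lemma' (r : ℕ → ℝ) (θ β C0 : ℝ) (hθ : 1 < θ) (hβ : 0 < β)
    (hβθ : β * (θ - 1) = 1) (hC0 : 0 < C0)
    (hnn : ∀ k, 0 ≤ r k)
    (hkey : ∀ k, r (k + 1) ^ θ ≤ C0 * (r k - r (k + 1))) :
    ∃ C : ℝ, 0 < C ∧ ∀ k : ℕ, 1 ≤ k → r k ≤ C * (k : ℝ) ^ (-β) := by
  set B : ℝ := max β 1 with hB
  have hB1 : 1 ≤ B := le_max_right _ _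
  have hBpos : 0 < B := lt_of_lt_of_le one_pos hB1
  set Cb : ℝ := C0 * B * (2 : ℝ) ^ β with hCb
  have hCbpos : 0 < Cb := by positivity
  have hθ1 : 0 < θ - 1 := by linarith
  set C : ℝ := max (r 1 + 1) (Cb ^ (1 / (θ - 1))) with hC
  have hCpos : 0 < C := lt_of_lt_of_le (by linarith [hnn 1]) (le_max_left _ _)
  have hC1 : r 1 ≤ C := le_trans (by linarith) (le_max_left _ _)
  have hC2 : Cb ≤ C ^ (θ - 1) := by
    have h1 : Cb ^ (1 / (θ - 1)) ≤ C := le_max_right _ _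
    calc Cb = (Cb ^ (1 / (θ - 1))) ^ (θ - 1) := by
              rw [← Real.rpow_mul hCbpos.le, one_div_mul_cancel hθ1.ne', Real.rpow_one]
      _ ≤ C ^ (θ - 1) := Real.rpow_le_rpow (Real.rpow_nonneg hCbpos.le _) h1 hθ1.le
  refine ⟨C, hCpos, ?_⟩
  have main : ∀ k : ℕ, r (k + 1) ≤ C * ((k + 1 : ℕ) : ℝ) ^ (-β) := by
    intro k
    induction k with
    | zero => simpa using hC1
    | succ k ih =>
      by_contra hcon
      push_neg at hcon
      set n : ℝ := ((k + 1 : ℕ) : ℝ) with hn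
      have hn1 : (1 : ℝ) ≤ n := by rw [hn]; exact_mod_cast Nat.succ_le_succ (Nat.zero_le k)
      have hnpos : (0 : ℝ) < n := lt_of_lt_of_le one_pos hn1
      have hm : ((k + 1 + 1 : ℕ) : ℝ) = n + 1 := by push_cast [hn]; ring
      set m : ℝ := n + 1 with hmdef
      have hmpos : (0 : ℝ) < m := by linarith
      rw [hm] at hcon
      set a : ℝ := C * m ^ (-β) with ha
      have hapos : 0 < a := by positivity
      -- from the key inequality
      have h1 : a + a ^ θ / C0 < r (k + 1 + 1) + r (k + 1 + 1) ^ θ / C0 := by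
        have h2 : a ^ θ < r (k + 1 + 1) ^ θ :=
          Real.rpow_lt_rpow hapos.le hcon (by linarith)
        have h2' : a ^ θ / C0 < r (k + 1 + 1) ^ θ / C0 := by
          gcongr
        linarith
      have h3 : r (k + 1 + 1) + r (k + 1 + 1) ^ θ / C0 ≤ r (k + 1) := by
        have h3' : r (k + 1 + 1) ^ θ / C0 ≤ r (k + 1) - r (k + 1 + 1) := by
          rw [div_le_iff₀ hC0]
          nlinarith [hkey (k + 1)]
        linarith
      -- the numeric inequality :  C * n^(-β) ≤ a + a^θ / C0
      have hmain : C * n ^ (-β) ≤ a + a ^ θ / C0 := by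
        -- a^θ = C^θ * m^(-(β+1))
        have haθ : a ^ θ = C ^ θ * m ^ (-(β + 1)) := by
          rw [ha, Real.mul_rpow hCpos.le (Real.rpow_nonneg hmpos.le _),
            ← Real.rpow_mul hmpos.le]
          congr 2
          have : β * θ = β + 1 := by nlinarith
          nlinarith
        -- claim 1 : n^(-β) - m^(-β) ≤ B * n^(-β) / m
        have claim1 : n ^ (-β) - m ^ (-β) ≤ B * n ^ (-β) / m := by
          set t : ℝ := n / m with ht
          have htpos : 0 < t := by positivity
          have ht1 : t ≤ 1 := by rw [ht, div_le_one hmpos]; linarith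
          have hmt : m ^ (-β) = n ^ (-β) * t ^ β := by
            rw [ht, Real.div_rpow hnpos.le hmpos.le, Real.rpow_neg hnpos.le,
              Real.rpow_neg hmpos.le]
            have hnβ0 : n ^ β ≠ 0 := (Real.rpow_pos_of_pos hnpos β).ne'
            field_simp
          have hbern : 1 - t ^ β ≤ B * (1 - t) := by
            rcases le_or_gt 1 β with hb | hb
            · have := one_add_mul_self_le_rpow_one_add
                (by linarith : (-1 : ℝ) ≤ t - 1) hb
              have ht' : 1 + (t - 1) = t := by ring
              rw [ht'] at this
              have hβB : β ≤ B := le_max_left _ _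
              nlinarith
            · have h4 : t ^ (1 : ℝ) ≤ t ^ β :=
                Real.rpow_le_rpow_of_exponent_ge htpos ht1 hb.le
              rw [Real.rpow_one] at h4
              nlinarith
          have h1mt : 1 - t = 1 / m := by rw [ht]; field_simp; ring
          have hnβ : 0 ≤ n ^ (-β) := Real.rpow_nonneg hnpos.le _
          calc n ^ (-β) - m ^ (-β) = n ^ (-β) * (1 - t ^ β) := by rw [hmt]; ring
            _ ≤ n ^ (-β) * (B * (1 - t)) := by
                apply mul_le_mul_of_nonneg_left hbern hnβ
            _ = B * n ^ (-β) / m := by rw [h1mt]; ring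
        -- claim 2 : 2^(-β) * n^(-β) / m ≤ m^(-(β+1))
        have claim2 : (2 : ℝ) ^ (-β) * n ^ (-β) / m ≤ m ^ (-(β + 1)) := by
          have hm2n : m ≤ 2 * n := by rw [hmdef]; linarith
          have h5 : m ^ β ≤ (2 * n) ^ β :=
            Real.rpow_le_rpow hmpos.le hm2n hβ.le
          have h6 : (2 * n) ^ (-β) ≤ m ^ (-β) := by
            rw [Real.rpow_neg hmpos.le, Real.rpow_neg (by positivity)]
            exact inv_anti₀ (Real.rpow_pos_of_pos hmpos _) h5
          have h7 : (2 * n) ^ (-β) = (2 : ℝ) ^ (-β) * n ^ (-β) :=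
            Real.mul_rpow (by norm_num) hnpos.le
          have h8 : m ^ (-(β + 1)) = m ^ (-β) / m := by
            rw [show -(β + 1) = -β + (-1) by ring, Real.rpow_add hmpos,
              Real.rpow_neg_one]
            ring
          rw [h8, ← h7]
          exact (div_le_div_iff_of_pos_right hmpos).mpr h6
        -- combine
        have hCθ : C ^ θ = C ^ (θ - 1) * C := by
          rw [show θ = (θ - 1) + 1 by ring, Real.rpow_add_one hCpos.ne']
          ring_nf
        have hkey2 : C * (B * n ^ (-β) / m) ≤ C ^ θ * m ^ (-(β + 1)) / C0 := by
          have h9 : C ^ θ * ((2 : ℝ) ^ (-β) * n ^ (-β) / m) ≤ C ^ θ * m ^ (-(β + 1)) :=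
            mul_le_mul_of_nonneg_left claim2 (Real.rpow_nonneg hCpos.le _)
          have h10 : C * (B * n ^ (-β) / m) ≤ C ^ θ * ((2 : ℝ) ^ (-β) * n ^ (-β) / m) / C0 := by
            rw [le_div_iff₀ hC0, hCθ]
            have h11 : C0 * B ≤ C ^ (θ - 1) * (2 : ℝ) ^ (-β) := by
              have h2β : (2 : ℝ) ^ β * (2 : ℝ) ^ (-β) = 1 := by
                rw [← Real.rpow_add (by norm_num)]; norm_num
              calc C0 * B = Cb * (2:ℝ)^(-β) := by rw [hCb, mul_assoc, h2β, mul_one]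
                _ ≤ C ^ (θ - 1) * (2:ℝ)^(-β) :=
                    mul_le_mul_of_nonneg_right hC2 (Real.rpow_nonneg (by norm_num) _)
            have hnm : 0 ≤ n ^ (-β) / m := by positivity
            calc C * (B * n ^ (-β) / m) * C0 = (C0 * B) * C * (n ^ (-β) / m) := by ring
              _ ≤ (C ^ (θ - 1) * (2:ℝ)^(-β)) * C * (n ^ (-β) / m) := by
                  apply mul_le_mul_of_nonneg_right
                    (mul_le_mul_of_nonneg_right h11 hCpos.le) hnm
              _ = C ^ (θ - 1) * C * ((2:ℝ)^(-β) * n ^ (-β) / m) := by ring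
          exact h10.trans ((div_le_div_iff_of_pos_right hC0).mpr h9)
        -- finish : C n^{-β} ≤ C m^{-β} + C (n^{-β} - m^{-β}) and use claim1
        have h12 : C * (n ^ (-β) - m ^ (-β)) ≤ C * (B * n ^ (-β) / m) :=
          mul_le_mul_of_nonneg_left claim1 hCpos.le
        rw [haθ, ha]
        have := h12.trans hkey2
        linarith
      linarith
  intro k hk
  obtain ⟨j, rfl⟩ := Nat.exists_eq_add_of_le hk
  simpa [Nat.add_comm] using main j


/-- Theorem 5, case (2): under the KL-type inequality with exponent `q < (p+1)/p`, the
NHOTA function values converge to `f*` at the sublinear rate `O(k^(−pq/(p+1−pq)))`. -/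
theorem nhota_kl_sublinear_rate
    {E : Type*} [NormedAddCommGroup E] [InnerProductSpace ℝ E] [FiniteDimensional ℝ E]
    (p : ℕ) (hp : 1 ≤ p) (σ A c u_min fstar : ℝ) (q : ℝ)
    (hσ : 0 < σ) (hA : 0 < A) (hc : 0 < c)
    (humin : 0 < u_min ∧ u_min ≤ 1)
    (hq : 0 < q ∧ q < ((p : ℝ) + 1) / p)
    (f : E → ℝ) (x : ℕ → E) (u R s : ℕ → ℝ)
    (hu : ∀ k : ℕ, u_min ≤ u (k + 1) ∧ u (k + 1) ≤ 1)
    (hRrec : ∀ k : ℕ, R (k + 1) = (1 - u (k + 1)) * R k + u (k + 1) * f (x (k + 1)))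
    (hbound : ∀ k : ℕ, fstar ≤ f (x k) ∧ f (x k) ≤ R k)
    (hdec : ∀ k : ℕ, u_min * c * ‖x (k + 1) - x k‖ ^ (p + 1) ≤ R k - R (k + 1))
    (hs : ∀ k : ℕ, 0 ≤ s (k + 1))
    (hsb : ∀ k : ℕ, s (k + 1) ≤ A * ‖x (k + 1) - x k‖ ^ p)
    (hkl : ∀ k : ℕ, f (x (k + 1)) - fstar ≤ σ * s (k + 1) ^ q) :
    ∃ C : ℝ, 0 < C ∧ ∀ k : ℕ, 1 ≤ k →
      f (x k) - fstar ≤ C * (k : ℝ) ^ (-((p : ℝ) * q / ((p : ℝ) + 1 - p * q))) := by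
  obtain ⟨humin1, humin2⟩ := humin
  obtain ⟨hq0, hq1⟩ := hq
  have hP1 : (1 : ℝ) ≤ (p : ℝ) := by exact_mod_cast hp
  have hPpos : (0 : ℝ) < p := by linarith
  have hPq : (0 : ℝ) < (p : ℝ) * q := by positivity
  have hpq1 : (p : ℝ) * q < (p : ℝ) + 1 := by
    have h := (lt_div_iff₀ hPpos).mp hq1
    nlinarith
  have hden : (0 : ℝ) < (p : ℝ) + 1 - (p : ℝ) * q := by linarith
  set θ : ℝ := ((p : ℝ) + 1) / ((p : ℝ) * q) with hθdef
  set β : ℝ := (p : ℝ) * q / ((p : ℝ) + 1 - (p : ℝ) * q) with hβdef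
  have hθ : 1 < θ := by rw [hθdef, lt_div_iff₀ hPq]; linarith
  have hθpos : 0 < θ := by linarith
  have hβ : 0 < β := by rw [hβdef]; positivity
  have hβθ : β * (θ - 1) = 1 := by
    rw [hβdef, hθdef]
    field_simp
  have hrnn : ∀ k : ℕ, 0 ≤ R k - fstar := fun k => by
    have := (hbound k).1; have := (hbound k).2; linarith
  have hmono : ∀ k : ℕ, R (k + 1) - fstar ≤ R k - fstar := fun k => by
    have h := hdec k
    have : (0:ℝ) ≤ u_min * c * ‖x (k + 1) - x k‖ ^ (p + 1) := by positivity
    linarith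
  have hr0 : ∀ k : ℕ, R k - fstar ≤ R 0 - fstar := by
    intro k
    induction k with
    | zero => exact le_refl _
    | succ k ih => exact (hmono k).trans ih
  set G : ℝ := (1 + (R 0 - fstar)) ^ (1 - 1/θ) with hG
  have hGpos : 0 < G := Real.rpow_pos_of_pos (by linarith [hrnn 0]) _
  set M : ℝ := (1 - u_min) * G + σ * A ^ q * (u_min * c) ^ (-(1/θ)) with hM
  have hMpos : 0 < M := by
    rw [hM]
    have h1 : 0 ≤ (1 - u_min) * G := mul_nonneg (by linarith) hGpos.le
    have h2 : 0 < σ * A ^ q * (u_min * c) ^ (-(1/θ)) := by positivity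
    linarith
  set C0 : ℝ := (M / u_min) ^ θ with hC0def
  have hC0 : 0 < C0 := Real.rpow_pos_of_pos (by positivity) _
  have hkey : ∀ k : ℕ, (R (k + 1) - fstar) ^ θ ≤
      C0 * ((R k - fstar) - (R (k + 1) - fstar)) := by
    intro k
    have hdecK := hdec k
    have hsbK := hsb k
    have hklK := hkl k
    have hsK := hs k
    have hbK := hbound (k + 1)
    have hmK := hmono k
    have hrK := hrnn k
    have hrK1 := hrnn (k + 1)
    have hr0K := hr0 k
    set D : ℝ := ‖x (k + 1) - x k‖ with hD
    have hD0 : 0 ≤ D := norm_nonneg _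
    set a : ℝ := R k - fstar with ha
    set b : ℝ := R (k + 1) - fstar with hb
    set d : ℝ := a - b with hd
    have hd0 : 0 ≤ d := by rw [hd]; linarith
    have hFnn : 0 ≤ f (x (k + 1)) - fstar := by linarith [hbK.1]
    have hfub : f (x (k + 1)) - fstar ≤ σ * A ^ q * D ^ ((p : ℝ) * q) := by
      have h1 : s (k + 1) ^ q ≤ (A * D ^ p) ^ q :=
        Real.rpow_le_rpow hsK hsbK hq0.le
      have h2 : (A * D ^ p) ^ q = A ^ q * D ^ ((p : ℝ) * q) := by
        rw [Real.mul_rpow hA.le (by positivity), ← Real.rpow_natCast D p,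
          ← Real.rpow_mul hD0]
      calc f (x (k + 1)) - fstar ≤ σ * s (k + 1) ^ q := hklK
        _ ≤ σ * (A * D ^ p) ^ q := mul_le_mul_of_nonneg_left h1 hσ.le
        _ = σ * A ^ q * D ^ ((p : ℝ) * q) := by rw [h2]; ring
    have e2 : u_min * b ≤ (1 - u_min) * d + σ * A ^ q * D ^ ((p : ℝ) * q) := by
      have e1 : b = (1 - u (k + 1)) * a + u (k + 1) * (f (x (k + 1)) - fstar) := by
        rw [hb, ha]; linear_combination hRrec k
      have h1 : u_min * a ≤ u (k + 1) * a := mul_le_mul_of_nonneg_right (hu k).1 hrK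
      have h2 : u (k + 1) * (f (x (k + 1)) - fstar) ≤ 1 * (f (x (k + 1)) - fstar) :=
        mul_le_mul_of_nonneg_right (hu k).2 hFnn
      have h3 : b ≤ (1 - u_min) * a + σ * A ^ q * D ^ ((p : ℝ) * q) := by
        rw [e1]; nlinarith
      rw [hd]; nlinarith
    have h3 : D ^ ((p : ℝ) * q) ≤ d ^ (1/θ) * (u_min * c) ^ (-(1/θ)) := by
      have h4 : D ^ (p + 1) ≤ d / (u_min * c) := by
        rw [le_div_iff₀ (by positivity)]
        rw [hd, ha, hb]
        nlinarith [hdecK]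
      have h5 : D ^ ((p : ℝ) * q) = ((D ^ (p + 1) : ℝ)) ^ (1/θ) := by
        rw [← Real.rpow_natCast D (p + 1), ← Real.rpow_mul hD0]
        congr 1
        rw [hθdef]
        push_cast
        field_simp
      have h6 : ((D ^ (p + 1) : ℝ)) ^ (1/θ) ≤ (d / (u_min * c)) ^ (1/θ) :=
        Real.rpow_le_rpow (by positivity) h4 (by positivity)
      have h7 : (d / (u_min * c)) ^ (1/θ) = d ^ (1/θ) * (u_min * c) ^ (-(1/θ)) := by
        rw [Real.div_rpow hd0 (by positivity), Real.rpow_neg (by positivity), div_eq_mul_inv]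
      rw [h5, ← h7]; exact h6
    have h8 : d ≤ d ^ (1/θ) * G := by
      rcases eq_or_lt_of_le hd0 with h | h
      · rw [← h, Real.zero_rpow (by positivity : (1:ℝ)/θ ≠ 0)]
        norm_num
      · have h9 : d = d ^ (1/θ) * d ^ (1 - 1/θ) := by
          rw [← Real.rpow_add h, add_sub_cancel, Real.rpow_one]
        have h10 : d ^ (1 - 1/θ) ≤ G := by
          rw [hG]
          apply Real.rpow_le_rpow hd0 (by rw [hd] at *; linarith)
          have : 1/θ ≤ 1 := by
            rw [div_le_one hθpos]; linarith
          linarith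
        calc d = d ^ (1/θ) * d ^ (1 - 1/θ) := h9
          _ ≤ d ^ (1/θ) * G := mul_le_mul_of_nonneg_left h10 (Real.rpow_nonneg hd0 _)
    have hub : u_min * b ≤ M * d ^ (1/θ) := by
      have t1 : (1 - u_min) * d ≤ (1 - u_min) * (d ^ (1/θ) * G) :=
        mul_le_mul_of_nonneg_left h8 (by linarith)
      have t2 : σ * A ^ q * D ^ ((p : ℝ) * q) ≤
          σ * A ^ q * (d ^ (1/θ) * (u_min * c) ^ (-(1/θ))) :=
        mul_le_mul_of_nonneg_left h3 (by positivity)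
      have hMd : M * d ^ (1/θ) = (1 - u_min) * (d ^ (1/θ) * G)
          + σ * A ^ q * (d ^ (1/θ) * (u_min * c) ^ (-(1/θ))) := by
        rw [hM]; ring
      calc u_min * b ≤ (1 - u_min) * d + σ * A ^ q * D ^ ((p : ℝ) * q) := e2
        _ ≤ (1 - u_min) * (d ^ (1/θ) * G)
            + σ * A ^ q * (d ^ (1/θ) * (u_min * c) ^ (-(1/θ))) := add_le_add t1 t2
        _ = M * d ^ (1/θ) := hMd.symm
    have hble : b ≤ (M / u_min) * d ^ (1/θ) := by
      rw [div_mul_eq_mul_div, le_div_iff₀ humin1]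
      linarith
    have hfin : b ^ θ ≤ ((M / u_min) * d ^ (1/θ)) ^ θ :=
      Real.rpow_le_rpow hrK1 hble hθpos.le
    have heq : ((M / u_min) * d ^ (1/θ)) ^ θ = C0 * d := by
      rw [Real.mul_rpow (by positivity) (Real.rpow_nonneg hd0 _),
        ← Real.rpow_mul hd0, one_div, inv_mul_cancel₀ hθpos.ne', Real.rpow_one, hC0def]
    rw [heq] at hfin
    exact hfin
  obtain ⟨C, hCpos, hC⟩ := rate_lemma' (fun k => R k - fstar) θ β C0 hθ hβ hβθ hC0 hrnn hkey
  refine ⟨C, hCpos, fun k hk => ?_⟩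
  have h1 := hC k hk
  have h2 := (hbound k).2
  linarith
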